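/- Let Γ = (V,E) be a connected graph with V countable and every vertex of finite degree, with path metric d. Suppose that for every n ∈ ℕ there is a number M_n such that every rigid triple {x,y,z} with d(x,y) = n has perimeter at most M_n. Then for every weakly-geodesic ray γ : T → V there exists a geodesic ray γ' : T' → V with lim_{t→∞, t∈T} (d(γ(t),y) − d(γ(t),z)) = lim_{t→∞, t∈T'} (d(γ'(t),y) − d(γ'(t),z)) for all y, z ∈ V; that is, every point of the metric boundary of (V,d) is a Busemann point. -/

import Mathlib

open Filter Topology

/-- `T` is a valid domain for a ray: an unbounded subset of `[0,∞)` containing `0`. -/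
def IsRayDomain (T : Set ℝ) : Prop :=
  T ⊆ Set.Ici (0 : ℝ) ∧ 0 ∈ T ∧ ∀ M : ℝ, ∃ t ∈ T, M < t

/-- A weakly-geodesic ray for the distance function `d`. -/
def WeaklyGeodesicRay {X : Type*} (d : X → X → ℝ) (T : Set ℝ) (γ : ℝ → X) : Prop :=
  ∀ y : X, ∀ ε : ℝ, 0 < ε → ∃ N : ℝ, ∀ s ∈ T, ∀ t ∈ T, N ≤ s → N ≤ t →
    |d (γ t) (γ 0) - t| < ε ∧ |d (γ t) y - d (γ s) y - (t - s)| < ε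

/-- An almost-geodesic ray for the distance function `d`. -/
def AlmostGeodesicRay {X : Type*} (d : X → X → ℝ) (T : Set ℝ) (γ : ℝ → X) : Prop :=
  ∀ ε : ℝ, 0 < ε → ∃ N : ℝ, ∀ s ∈ T, ∀ t ∈ T, N ≤ s → s ≤ t →
    |d (γ t) (γ s) + d (γ s) (γ 0) - t| < ε

/-- A geodesic ray for the distance function `d`. -/
def GeodesicRay {X : Type*} (d : X → X → ℝ) (T : Set ℝ) (γ : ℝ → X) : Prop :=
  ∀ s ∈ T, ∀ t ∈ T, d (γ s) (γ t) = |s - t|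

/-- `L` is the limit of `d(γ(t),y) - d(γ(t),z)` as `t → ∞` along `T`. -/
def RayLimit {X : Type*} (d : X → X → ℝ) (T : Set ℝ) (γ : ℝ → X) (y z : X) (L : ℝ) : Prop :=
  Tendsto (fun t => d (γ t) y - d (γ t) z) (atTop ⊓ 𝓟 T) (𝓝 L)

/-- Minimal paths from `a` to `c` and from `b` to `c` share a tail: there is a vertex
`z ≠ c` lying simultaneously on a minimal path from `a` to `c` and on one from `b` to `c`. -/
def ShareTail {V : Type*} (d : V → V → ℕ) (a b c : V) : Prop :=
  ∃ z, z ≠ c ∧ d a z + d z c = d a c ∧ d b z + d z c = d b c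

/-- No minimal paths from apex `x` to `y` and from `x` to `z` share a vertex other than `x`. -/
def RigidApex {V : Type*} (d : V → V → ℕ) (x y z : V) : Prop :=
  ∀ w, w ≠ x → ¬(d x w + d w y = d x y ∧ d x w + d w z = d x z)

/-- A rigid triple: three distinct vertices, rigid at each apex. -/
def RigidTriple {V : Type*} (d : V → V → ℕ) (x y z : V) : Prop :=
  x ≠ y ∧ y ≠ z ∧ x ≠ z ∧
    RigidApex d x y z ∧ RigidApex d y x z ∧ RigidApex d z x y

namespace Stmt7Aux

/-- Cofinal subset of ℝ. -/
def Cof (S : Set ℝ) : Prop := ∀ M : ℝ, ∃ t ∈ S, M < t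

lemma cof_pigeon {α : Type*} {S : Set ℝ} (hS : Cof S) {F : Set α} (hF : F.Finite)
    {f : ℝ → α} (hf : ∀ t ∈ S, f t ∈ F) :
    ∃ z ∈ F, Cof {t | t ∈ S ∧ f t = z} := by
  by_contra hc
  push_neg at hc
  have hc' : ∀ z : α, ∃ B : ℝ, z ∈ F → ∀ t, t ∈ S ∧ f t = z → t ≤ B := by
    intro z
    by_cases hz : z ∈ F
    · obtain ⟨B, hB⟩ : ∃ B : ℝ, ∀ t ∈ {t | t ∈ S ∧ f t = z}, ¬ B < t := by
        have h := hc z hz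
        unfold Cof at h
        push_neg at h
        obtain ⟨B, hB⟩ := h
        exact ⟨B, fun t ht => not_lt.mpr (hB t ht)⟩
      exact ⟨B, fun _ t ht => not_lt.mp (hB t ht)⟩
    · exact ⟨0, fun h => absurd h hz⟩
  choose B hB using hc'
  obtain ⟨C, hC⟩ := (hF.image B).bddAbove
  obtain ⟨t, htS, htC⟩ := hS C
  have h1 : f t ∈ F := hf t htS
  have h2 : t ≤ B (f t) := hB (f t) h1 t ⟨htS, rfl⟩
  have h3 : B (f t) ≤ C := hC (Set.mem_image_of_mem B h1)
  linarith

lemma exists_desc {V : Type*} {G : SimpleGraph V} (hconn : G.Connected) {w c : V}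
    (h : 1 ≤ G.dist w c) : ∃ u, G.Adj w u ∧ G.dist u c + 1 = G.dist w c := by
  obtain ⟨p, hp⟩ := hconn.exists_walk_length_eq_dist w c
  cases p with
  | nil => simp at hp; rw [SimpleGraph.dist_self] at h; omega
  | @cons _ u _ hadj q =>
    refine ⟨u, hadj, ?_⟩
    have h1 : G.dist u c ≤ q.length := SimpleGraph.dist_le q
    have h2 : G.dist w c ≤ G.dist w u + G.dist u c := hconn.dist_triangle
    have h3 : G.dist w u = 1 := SimpleGraph.dist_eq_one_iff_adj.mpr hadj
    simp only [SimpleGraph.Walk.length_cons] at hp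
    omega

lemma ball_finite {V : Type*} {G : SimpleGraph V} (hconn : G.Connected)
    (hfin : ∀ v : V, (G.neighborSet v).Finite) (v : V) :
    ∀ R : ℕ, {x : V | G.dist v x ≤ R}.Finite := by
  intro R
  induction R with
  | zero =>
    apply Set.Finite.subset (Set.finite_singleton v)
    intro x hx
    simp only [Set.mem_setOf_eq, Nat.le_zero] at hx
    simp [← hconn.dist_eq_zero_iff.mp hx]
  | succ R ih =>
    apply Set.Finite.subset (ih.union (Set.Finite.biUnion ih (fun u _ => hfin u)))
    intro x hx
    simp only [Set.mem_setOf_eq] at hx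
    by_cases hR : G.dist v x ≤ R
    · exact Or.inl hR
    · right
      have h1 : 1 ≤ G.dist x v := by rw [SimpleGraph.dist_comm]; omega
      obtain ⟨u, hadj, hu⟩ := exists_desc hconn h1
      have huv : G.dist v u ≤ R := by
        rw [SimpleGraph.dist_comm]
        rw [SimpleGraph.dist_comm (u := v) (v := x)] at hx
        omega
      exact Set.mem_biUnion huv hadj.symm


def Mbar (M : ℕ → ℕ) (n : ℕ) : ℕ := (Finset.range (n+1)).sup M

def phi (M : ℕ → ℕ) (n : ℕ) : ℕ := n + Mbar M n + 1

def psi (M : ℕ → ℕ) (n : ℕ) : ℕ := phi M n + n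

lemma Mbar_mono (M : ℕ → ℕ) {m n : ℕ} (h : m ≤ n) : Mbar M m ≤ Mbar M n :=
  Finset.sup_mono (Finset.range_subset_range.mpr (by omega))

lemma le_Mbar (M : ℕ → ℕ) (n : ℕ) : M n ≤ Mbar M n :=
  Finset.le_sup (Finset.self_mem_range_succ n)

lemma phi_add (M : ℕ → ℕ) (k m : ℕ) : phi M k + m ≤ phi M (k + m) := by
  have := Mbar_mono M (show k ≤ k + m by omega)
  unfold phi; omega

lemma one_le_phi (M : ℕ → ℕ) (n : ℕ) : 1 ≤ phi M n := by unfold phi; omega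

section Graph
variable {V : Type*} {G : SimpleGraph V} (hconn : G.Connected) (M : ℕ → ℕ)

lemma dist_pos (hconn : G.Connected) {a b : V} (h : a ≠ b) : 1 ≤ G.dist a b :=
  hconn.pos_dist_of_ne h

lemma share (hconn : G.Connected)
    (hM : ∀ x y z : V, RigidTriple G.dist x y z →
      G.dist x y + G.dist y z + G.dist z x ≤ M (G.dist x y)) :
    ∀ a b c : V, phi M (G.dist a b) ≤ G.dist a c → phi M (G.dist a b) ≤ G.dist b c →
      ShareTail G.dist a b c := by
  have base : ∀ a c : V, a ≠ c → ShareTail G.dist a a c := by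
    intro a c hac
    exact ⟨a, hac, by simp [SimpleGraph.dist_self], by simp [SimpleGraph.dist_self]⟩
  suffices H : ∀ N, ∀ a b c : V, G.dist a b ≤ N →
      phi M (G.dist a b) ≤ G.dist a c → phi M (G.dist a b) ≤ G.dist b c →
      ShareTail G.dist a b c by
    exact fun a b c h1 h2 => H _ a b c le_rfl h1 h2
  intro N
  induction N with
  | zero =>
    intro a b c hab h1 h2
    have hab0 : G.dist a b = 0 := by omega
    have hab' : a = b := hconn.dist_eq_zero_iff.mp hab0
    subst hab'
    have hac : a ≠ c := by
      intro h; subst h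
      rw [SimpleGraph.dist_self] at h1
      have := one_le_phi M (G.dist a a); omega
    exact base a c hac
  | succ N ih =>
    intro a b c hab h1 h2
    by_cases hab0 : G.dist a b = 0
    · have hab' : a = b := hconn.dist_eq_zero_iff.mp hab0
      subst hab'
      have hac : a ≠ c := by
        intro h; subst h
        rw [SimpleGraph.dist_self] at h1
        have := one_le_phi M (G.dist a a); omega
      exact base a c hac
    · have hone := one_le_phi M (G.dist a b)
      have hne_ab : a ≠ b := fun h => hab0 (h ▸ SimpleGraph.dist_self)
      have hac : a ≠ c := by
        intro h; subst h; rw [SimpleGraph.dist_self] at h1; omega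
      have hbc : b ≠ c := by
        intro h; subst h; rw [SimpleGraph.dist_self] at h2; omega
      -- the triple is not rigid
      have hnr : ¬ RigidTriple G.dist a b c := by
        intro hR
        have hper := hM a b c hR
        have hMb := le_Mbar M (G.dist a b)
        have hcomm : G.dist c a = G.dist a c := SimpleGraph.dist_comm
        unfold phi at h1
        omega
      by_cases hA1 : RigidApex G.dist a b c
      · by_cases hA2 : RigidApex G.dist b a c
        · by_cases hA3 : RigidApex G.dist c a b
          · exact absurd ⟨hne_ab, hbc, hac, hA1, hA2, hA3⟩ hnr
          · -- apex c fails: direct gate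
            unfold RigidApex at hA3
            push_neg at hA3
            obtain ⟨w, hwc, hw1, hw2⟩ := hA3
            refine ⟨w, hwc, ?_, ?_⟩
            · rw [SimpleGraph.dist_comm (u := a) (v := w), SimpleGraph.dist_comm (u := w) (v := c),
                SimpleGraph.dist_comm (u := a) (v := c)]
              omega
            · rw [SimpleGraph.dist_comm (u := b) (v := w), SimpleGraph.dist_comm (u := w) (v := c),
                SimpleGraph.dist_comm (u := b) (v := c)]
              omega
        · -- apex b fails
          unfold RigidApex at hA2
          push_neg at hA2
          obtain ⟨w, hwb, hw1, hw2⟩ := hA2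
          -- hw1 : d b w + d w a = d b a, hw2 : d b w + d w c = d b c
          have hwb1 : 1 ≤ G.dist b w := dist_pos hconn (Ne.symm hwb)
          have hcomm1 : G.dist b a = G.dist a b := SimpleGraph.dist_comm
          have hcomm2 : G.dist w a = G.dist a w := SimpleGraph.dist_comm
          have hsplit : G.dist a w + G.dist b w = G.dist a b := by omega
          have hphi : phi M (G.dist a w) + G.dist b w ≤ phi M (G.dist a b) := by
            have := phi_add M (G.dist a w) (G.dist b w)
            rw [hsplit] at this; exact this
          have haw : G.dist a w ≤ N := by omega
          have hh1 : phi M (G.dist a w) ≤ G.dist a c := by omega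
          have hh2 : phi M (G.dist a w) ≤ G.dist w c := by
            have htri : G.dist b c ≤ G.dist b w + G.dist w c := hconn.dist_triangle
            omega
          obtain ⟨z, hzc, hz1, hz2⟩ := ih a w c haw hh1 hh2
          refine ⟨z, hzc, hz1, ?_⟩
          have htri1 : G.dist b z ≤ G.dist b w + G.dist w z := hconn.dist_triangle
          have htri2 : G.dist b c ≤ G.dist b z + G.dist z c := hconn.dist_triangle
          omega
      · -- apex a fails
        unfold RigidApex at hA1
        push_neg at hA1
        obtain ⟨w, hwa, hw1, hw2⟩ := hA1
        -- hw1 : d a w + d w b = d a b, hw2 : d a w + d w c = d a c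
        have hwa1 : 1 ≤ G.dist a w := dist_pos hconn (Ne.symm hwa)
        have hcomm2 : G.dist w b = G.dist b w := SimpleGraph.dist_comm
        have hphi : phi M (G.dist w b) + G.dist a w ≤ phi M (G.dist a b) := by
          have h := phi_add M (G.dist w b) (G.dist a w)
          have : G.dist w b + G.dist a w = G.dist a b := by omega
          rw [this] at h; exact h
        have hwb : G.dist w b ≤ N := by omega
        have hh1 : phi M (G.dist w b) ≤ G.dist w c := by omega
        have hh2 : phi M (G.dist w b) ≤ G.dist b c := by omega
        obtain ⟨z, hzc, hz1, hz2⟩ := ih w b c hwb hh1 hh2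
        refine ⟨z, hzc, ?_, hz2⟩
        have htri1 : G.dist a z ≤ G.dist a w + G.dist w z := hconn.dist_triangle
        have htri2 : G.dist a c ≤ G.dist a z + G.dist z c := hconn.dist_triangle
        omega

lemma gate (hconn : G.Connected)
    (hM : ∀ x y z : V, RigidTriple G.dist x y z →
      G.dist x y + G.dist y z + G.dist z x ≤ M (G.dist x y)) :
    ∀ a b c : V, phi M (G.dist a b) ≤ G.dist a c → phi M (G.dist a b) ≤ G.dist b c →
      ∃ z : V, G.dist a z + G.dist z c = G.dist a c ∧
        G.dist b z + G.dist z c = G.dist b c ∧ G.dist a z ≤ psi M (G.dist a b) := by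
  suffices H : ∀ N, ∀ a b c : V, G.dist a c ≤ N →
      phi M (G.dist a b) ≤ G.dist a c → phi M (G.dist a b) ≤ G.dist b c →
      ∃ z : V, G.dist a z + G.dist z c = G.dist a c ∧
        G.dist b z + G.dist z c = G.dist b c ∧ G.dist a z ≤ psi M (G.dist a b) by
    exact fun a b c h1 h2 => H _ a b c le_rfl h1 h2
  intro N
  induction N with
  | zero =>
    intro a b c hac h1 h2
    exact ⟨c, by simp [SimpleGraph.dist_self], by simp [SimpleGraph.dist_self], by unfold psi; omega⟩
  | succ N ih =>
    intro a b c hac h1 h2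
    by_cases hsm : G.dist a c ≤ psi M (G.dist a b)
    · exact ⟨c, by simp [SimpleGraph.dist_self], by simp [SimpleGraph.dist_self], hsm⟩
    · obtain ⟨z₁, hz₁c, ha₁, hb₁⟩ := share M hconn hM a b c h1 h2
      have hz₁pos : 1 ≤ G.dist z₁ c := dist_pos hconn hz₁c
      by_cases hsm2 : G.dist a z₁ ≤ psi M (G.dist a b)
      · exact ⟨z₁, ha₁, hb₁, hsm2⟩
      · have hmeas : G.dist a z₁ ≤ N := by omega
        have hh1 : phi M (G.dist a b) ≤ G.dist a z₁ := by
          have : phi M (G.dist a b) ≤ psi M (G.dist a b) := by unfold psi; omega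
          omega
        have hh2 : phi M (G.dist a b) ≤ G.dist b z₁ := by
          have htri : G.dist a z₁ ≤ G.dist a b + G.dist b z₁ := hconn.dist_triangle
          have : psi M (G.dist a b) = phi M (G.dist a b) + G.dist a b := rfl
          omega
        obtain ⟨z, hz1, hz2, hz3⟩ := ih a b z₁ hmeas hh1 hh2
        refine ⟨z, ?_, ?_, hz3⟩
        · have htri1 : G.dist z c ≤ G.dist z z₁ + G.dist z₁ c := hconn.dist_triangle
          have htri2 : G.dist a c ≤ G.dist a z + G.dist z c := hconn.dist_triangle
          omega
        · have htri1 : G.dist z c ≤ G.dist z z₁ + G.dist z₁ c := hconn.dist_triangle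
          have htri2 : G.dist b c ≤ G.dist b z + G.dist z c := hconn.dist_triangle
          omega

end Graph

lemma phi_mono (M : ℕ → ℕ) {m n : ℕ} (h : m ≤ n) : phi M m ≤ phi M n := by
  have : Mbar M m ≤ Mbar M n := Finset.sup_mono (Finset.range_subset_range.mpr (by omega))
  unfold phi; omega

lemma psi_mono (M : ℕ → ℕ) {m n : ℕ} (h : m ≤ n) : psi M m ≤ psi M n := by
  have := phi_mono M h; unfold psi; omega

section Step
variable {V : Type*} {G : SimpleGraph V}

lemma step (hconn : G.Connected) (hfin : ∀ v : V, (G.neighborSet v).Finite) (M : ℕ → ℕ)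
    (hM : ∀ x y z : V, RigidTriple G.dist x y z →
      G.dist x y + G.dist y z + G.dist z x ≤ M (G.dist x y))
    {T : Set ℝ} {γ : ℝ → V}
    (hγ : WeaklyGeodesicRay (fun x y => (G.dist x y : ℝ)) T γ)
    (y w : V) (n : ℕ) (S : Set ℝ)
    (hST : S ⊆ T) (hCof : Cof S)
    (hInv : ∀ t ∈ S, G.dist (γ 0) (γ t) = G.dist w (γ t) + n) :
    ∃ (w' : V) (n' : ℕ) (S' : Set ℝ), S' ⊆ S ∧ Cof S' ∧
      (∀ t ∈ S', G.dist (γ 0) (γ t) = G.dist w' (γ t) + n') ∧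
      n < n' ∧ G.dist w w' + n ≤ n' ∧
      (∀ t ∈ S', G.dist y w' + G.dist w' (γ t) = G.dist y (γ t)) := by
  classical
  obtain ⟨N₀, hN₀⟩ := hγ (γ 0) 1 one_pos
  set A : ℕ := G.dist w y + 1 with hA
  set C : ℕ := n + 1 + phi M A + G.dist (γ 0) y with hC
  set S₁ : Set ℝ := {t | t ∈ S ∧ max N₀ ((C : ℝ) + 1) ≤ t} with hS₁
  have hS₁S : ∀ t ∈ S₁, t ∈ S := fun t ht => ht.1
  have hS₁cof : Cof S₁ := by
    intro B
    obtain ⟨t, ht, hBt⟩ := hCof (max B (max N₀ ((C : ℝ) + 1)))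
    exact ⟨t, ⟨ht, le_of_lt (lt_of_le_of_lt (le_max_right _ _) hBt)⟩,
      lt_of_le_of_lt (le_max_left _ _) hBt⟩
  have hDt : ∀ t ∈ S₁, C + 1 ≤ G.dist (γ 0) (γ t) := by
    intro t ht
    have htT : t ∈ T := hST ht.1
    have htN : N₀ ≤ t := le_trans (le_max_left _ _) ht.2
    have habs := (hN₀ t htT t htT htN htN).1
    have htC : (C : ℝ) + 1 ≤ t := le_trans (le_max_right _ _) ht.2
    have : (C : ℝ) < (G.dist (γ t) (γ 0) : ℝ) := by
      rw [abs_lt] at habs; linarith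
    have hlt : C < G.dist (γ t) (γ 0) := by exact_mod_cast this
    rw [SimpleGraph.dist_comm]; omega
  have hdesc : ∀ t ∈ S₁, ∃ u, G.Adj w u ∧ G.dist u (γ t) + 1 = G.dist w (γ t) := by
    intro t ht
    have h1 := hInv t (hS₁S t ht)
    have h2 := hDt t ht
    exact exists_desc hconn (by omega)
  set f : ℝ → V := fun t => if h : t ∈ S₁ then (hdesc t h).choose else w with hf
  have hfmem : ∀ t ∈ S₁, f t ∈ G.neighborSet w := by
    intro t ht
    simp only [hf, dif_pos ht]
    exact (hdesc t ht).choose_spec.1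
  obtain ⟨u, huF, hS₂cof⟩ := cof_pigeon hS₁cof (hfin w) hfmem
  set S₂ : Set ℝ := {t | t ∈ S₁ ∧ f t = u} with hS₂
  have hu : G.Adj w u := huF
  have hwu : G.dist w u = 1 := SimpleGraph.dist_eq_one_iff_adj.mpr hu
  have hdesc₂ : ∀ t ∈ S₂, G.dist u (γ t) + 1 = G.dist w (γ t) := by
    intro t ht
    have h := (hdesc t ht.1).choose_spec.2
    have : f t = (hdesc t ht.1).choose := by simp only [hf, dif_pos ht.1]
    rw [← this, ht.2] at h
    exact h
  have huy : G.dist u y ≤ A := by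
    have htri : G.dist u y ≤ G.dist u w + G.dist w y := hconn.dist_triangle
    have : G.dist u w = 1 := by rw [SimpleGraph.dist_comm]; exact hwu
    omega
  have hgate : ∀ t ∈ S₂, ∃ z : V, G.dist u z + G.dist z (γ t) = G.dist u (γ t) ∧
      G.dist y z + G.dist z (γ t) = G.dist y (γ t) ∧ G.dist u z ≤ psi M (G.dist u y) := by
    intro t ht
    have h1 := hInv t (hS₁S t ht.1)
    have h2 := hDt t ht.1
    have h3 := hdesc₂ t ht
    have hphA : phi M (G.dist u y) ≤ phi M A := phi_mono M huy
    have htri : G.dist (γ 0) (γ t) ≤ G.dist (γ 0) y + G.dist y (γ t) := hconn.dist_triangle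
    exact gate M hconn hM u y (γ t) (by omega) (by omega)
  set g : ℝ → V := fun t => if h : t ∈ S₂ then (hgate t h).choose else u with hg
  have hgmem : ∀ t ∈ S₂, g t ∈ {x : V | G.dist u x ≤ psi M A} := by
    intro t ht
    simp only [hg, dif_pos ht, Set.mem_setOf_eq]
    exact le_trans (hgate t ht).choose_spec.2.2 (psi_mono M huy)
  obtain ⟨z, _, hS₃cof⟩ := cof_pigeon hS₂cof (ball_finite hconn hfin u (psi M A)) hgmem
  set S₃ : Set ℝ := {t | t ∈ S₂ ∧ g t = z} with hS₃
  have hz : ∀ t ∈ S₃, G.dist u z + G.dist z (γ t) = G.dist u (γ t) ∧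
      G.dist y z + G.dist z (γ t) = G.dist y (γ t) := by
    intro t ht
    have h := (hgate t ht.1).choose_spec
    have heq : g t = (hgate t ht.1).choose := by simp only [hg, dif_pos ht.1]
    rw [← heq, ht.2] at h
    exact ⟨h.1, h.2.1⟩
  refine ⟨z, n + 1 + G.dist u z, S₃, fun t ht => hS₁S t ht.1.1, hS₃cof, ?_, by omega, ?_, ?_⟩
  · intro t ht
    have h1 := hInv t (hS₁S t ht.1.1)
    have h2 := hdesc₂ t ht.1
    have h3 := (hz t ht).1
    omega
  · have htri : G.dist w z ≤ G.dist w u + G.dist u z := hconn.dist_triangle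
    omega
  · exact fun t ht => (hz t ht).2
end Step

section Chain
variable {V : Type*} {G : SimpleGraph V}

lemma exists_chain (hconn : G.Connected) (hfin : ∀ v : V, (G.neighborSet v).Finite)
    (M : ℕ → ℕ)
    (hM : ∀ x y z : V, RigidTriple G.dist x y z →
      G.dist x y + G.dist y z + G.dist z x ≤ M (G.dist x y))
    {T : Set ℝ} {γ : ℝ → V} (hT : IsRayDomain T)
    (hγ : WeaklyGeodesicRay (fun x y => (G.dist x y : ℝ)) T γ) (e : ℕ → V) :
    ∃ (w : ℕ → V) (n : ℕ → ℕ) (S : ℕ → Set ℝ),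
      w 0 = γ 0 ∧ n 0 = 0 ∧
      (∀ m, S m ⊆ T) ∧ (∀ m, Cof (S m)) ∧
      (∀ m, ∀ t ∈ S m, G.dist (γ 0) (γ t) = G.dist (w m) (γ t) + n m) ∧
      (∀ m, S (m+1) ⊆ S m) ∧ (∀ m, n m < n (m+1)) ∧
      (∀ m, G.dist (w m) (w (m+1)) + n m ≤ n (m+1)) ∧
      (∀ m, ∀ t ∈ S (m+1),
        G.dist (e m) (w (m+1)) + G.dist (w (m+1)) (γ t) = G.dist (e m) (γ t)) := by
  classical
  have hstep : ∀ (m : ℕ) (p : V × ℕ × Set ℝ), ∃ q : V × ℕ × Set ℝ,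
      (p.2.2 ⊆ T ∧ Cof p.2.2 ∧
        (∀ t ∈ p.2.2, G.dist (γ 0) (γ t) = G.dist p.1 (γ t) + p.2.1)) →
      ((q.2.2 ⊆ T ∧ Cof q.2.2 ∧
        (∀ t ∈ q.2.2, G.dist (γ 0) (γ t) = G.dist q.1 (γ t) + q.2.1)) ∧
       q.2.2 ⊆ p.2.2 ∧ p.2.1 < q.2.1 ∧ G.dist p.1 q.1 + p.2.1 ≤ q.2.1 ∧
       (∀ t ∈ q.2.2, G.dist (e m) q.1 + G.dist q.1 (γ t) = G.dist (e m) (γ t))) := by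
    intro m p
    by_cases hp : p.2.2 ⊆ T ∧ Cof p.2.2 ∧
        (∀ t ∈ p.2.2, G.dist (γ 0) (γ t) = G.dist p.1 (γ t) + p.2.1)
    · obtain ⟨w', n', S', h1, h2, h3, h4, h5, h6⟩ :=
        step hconn hfin M hM hγ (e m) p.1 p.2.1 p.2.2 hp.1 hp.2.1 hp.2.2
      exact ⟨(w', n', S'), fun _ => ⟨⟨fun t ht => hp.1 (h1 ht), h2, h3⟩, h1, h4, h5, h6⟩⟩
    · exact ⟨p, fun h => absurd h hp⟩
  choose F hF using hstep
  set g : ℕ → V × ℕ × Set ℝ :=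
    fun m => Nat.rec (motive := fun _ => V × ℕ × Set ℝ) (γ 0, 0, T) (fun m ih => F m ih) m
    with hgdef
  have hgs : ∀ m, g (m+1) = F m (g m) := fun _ => rfl
  have hInv : ∀ m, (g m).2.2 ⊆ T ∧ Cof (g m).2.2 ∧
      (∀ t ∈ (g m).2.2, G.dist (γ 0) (γ t) = G.dist (g m).1 (γ t) + (g m).2.1) := by
    intro m
    induction m with
    | zero =>
      exact ⟨subset_rfl, hT.2.2, fun t ht => rfl⟩
    | succ m ih => exact (hF m (g m) ih).1
  have hRel := fun m => (hF m (g m) (hInv m)).2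
  refine ⟨fun m => (g m).1, fun m => (g m).2.1, fun m => (g m).2.2, rfl, rfl,
    fun m => (hInv m).1, fun m => (hInv m).2.1, fun m => (hInv m).2.2,
    fun m => (hRel m).1, fun m => (hRel m).2.1,
    fun m => (hRel m).2.2.1, fun m => (hRel m).2.2.2⟩
end Chain

end Stmt7Aux

open Stmt7Aux in
theorem stmt7 {V : Type*} [Countable V] (G : SimpleGraph V) (hconn : G.Connected)
    (hfin : ∀ v : V, (G.neighborSet v).Finite)
    (M : ℕ → ℕ)
    (hM : ∀ x y z : V, RigidTriple G.dist x y z →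
      G.dist x y + G.dist y z + G.dist z x ≤ M (G.dist x y)) :
    ∀ (T : Set ℝ) (γ : ℝ → V), IsRayDomain T →
      WeaklyGeodesicRay (fun x y => (G.dist x y : ℝ)) T γ →
      ∃ (T' : Set ℝ) (γ' : ℝ → V), IsRayDomain T' ∧
        GeodesicRay (fun x y => (G.dist x y : ℝ)) T' γ' ∧
        ∀ y z : V, ∃ L : ℝ,
          RayLimit (fun x y => (G.dist x y : ℝ)) T γ y z L ∧
          RayLimit (fun x y => (G.dist x y : ℝ)) T' γ' y z L := by
  intro T γ hT hγ
  classical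
  have hne : Nonempty V := ⟨γ 0⟩
  obtain ⟨e₀, he₀⟩ := exists_surjective_nat V
  set e : ℕ → V := fun m => e₀ (Nat.unpair m).1 with he
  have hsched : ∀ (y : V) (J : ℕ), ∃ m, J ≤ m ∧ e m = y := by
    intro y J
    obtain ⟨k, hk⟩ := he₀ y
    exact ⟨Nat.pair k J, Nat.right_le_pair k J, by simp [he, Nat.unpair_pair, hk]⟩
  obtain ⟨w, n, S, hw0, hn0, hSsubT, hScof, hInv, hSmono, hnmono, hcons, hpers⟩ :=
    exists_chain hconn hfin M hM hT hγ e
  -- monotonicity facts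
  have hSsub : ∀ i j, i ≤ j → S j ⊆ S i := by
    intro i j hij
    induction j, hij using Nat.le_induction with
    | base => exact subset_rfl
    | succ j hij ih => exact (hSmono j).trans ih
  have hnle : ∀ i j, i ≤ j → n i ≤ n j := by
    intro i j hij
    induction j, hij using Nat.le_induction with
    | base => exact le_rfl
    | succ j hij ih => exact ih.trans (hnmono j).le
  have hnlt : ∀ i j, i < j → n i < n j := fun i j hij =>
    lt_of_lt_of_le (hnmono i) (hnle (i+1) j hij)
  have hninj : Function.Injective n := by
    intro i j hij
    rcases lt_trichotomy i j with h|h|h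
    · exact absurd hij (hnlt i j h).ne
    · exact h
    · exact absurd hij.symm (hnlt j i h).ne
  have hnge : ∀ m, m ≤ n m := by
    intro m
    induction m with
    | zero => omega
    | succ m ih => have := hnmono m; omega
  -- geodesy
  have hup : ∀ i j, i ≤ j → G.dist (w i) (w j) + n i ≤ n j := by
    intro i j hij
    induction j, hij using Nat.le_induction with
    | base => simp [SimpleGraph.dist_self]
    | succ j hij ih =>
      have htri : G.dist (w i) (w (j+1)) ≤ G.dist (w i) (w j) + G.dist (w j) (w (j+1)) :=
        hconn.dist_triangle
      have := hcons j
      omega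
  have hSne : ∀ j, ∃ t, t ∈ S j := fun j => (hScof j 0).imp fun t ht => ht.1
  have hgeo : ∀ i j, i ≤ j → G.dist (w i) (w j) + n i = n j := by
    intro i j hij
    obtain ⟨t, ht⟩ := hSne j
    have h1 := hInv i t (hSsub i j hij ht)
    have h2 := hInv j t ht
    have htri : G.dist (w i) (γ t) ≤ G.dist (w i) (w j) + G.dist (w j) (γ t) :=
      hconn.dist_triangle
    have := hup i j hij
    omega
  -- persistence
  have hpers' : ∀ (y : V) (m : ℕ), e m = y → ∀ j, m + 1 ≤ j → ∀ t ∈ S j,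
      G.dist y (w j) + G.dist (w j) (γ t) = G.dist y (γ t) := by
    intro y m hm j hj
    induction j, hj using Nat.le_induction with
    | base =>
      intro t ht
      rw [← hm]
      exact hpers m t ht
    | succ j hj ih =>
      intro t ht
      have htj : t ∈ S j := hSmono j ht
      have h1 := ih t htj
      have h2 := hInv j t htj
      have h3 := hInv (j+1) t ht
      have htri1 : G.dist y (w (j+1)) ≤ G.dist y (w j) + G.dist (w j) (w (j+1)) :=
        hconn.dist_triangle
      have htri2 : G.dist y (γ t) ≤ G.dist y (w (j+1)) + G.dist (w (j+1)) (γ t) :=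
        hconn.dist_triangle
      have h4 := hgeo j (j+1) (by omega)
      omega
  -- the geodesic ray
  set T' : Set ℝ := {x | ∃ m : ℕ, x = (n m : ℝ)} with hT'def
  set γ' : ℝ → V := fun x => if h : ∃ m : ℕ, (n m : ℝ) = x then w h.choose else γ 0 with hγ'def
  have hγ'n : ∀ m, γ' ((n m : ℝ)) = w m := by
    intro m
    have hex : ∃ m' : ℕ, ((n m' : ℝ)) = (n m : ℝ) := ⟨m, rfl⟩
    simp only [hγ'def, dif_pos hex]
    congr 1
    exact hninj (by exact_mod_cast hex.choose_spec)
  have hray' : IsRayDomain T' := by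
    refine ⟨?_, ⟨0, by simp [hn0]⟩, ?_⟩
    · rintro x ⟨m, rfl⟩
      exact Set.mem_Ici.mpr (Nat.cast_nonneg _)
    · intro B
      obtain ⟨m, hm⟩ := exists_nat_gt B
      refine ⟨(n m : ℝ), ⟨m, rfl⟩, lt_of_lt_of_le hm ?_⟩
      exact_mod_cast hnge m
  have hkey : ∀ i j, i ≤ j → (G.dist (w i) (w j) : ℝ) = |(n i : ℝ) - (n j : ℝ)| := by
    intro i j hij
    have h := hgeo i j hij
    have hle : (n i : ℝ) ≤ (n j : ℝ) := by exact_mod_cast hnle i j hij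
    rw [abs_sub_comm, abs_of_nonneg (sub_nonneg.mpr hle)]
    have h2 : (G.dist (w i) (w j) : ℝ) + (n i : ℝ) = (n j : ℝ) := by exact_mod_cast h
    linarith
  have hgeod : GeodesicRay (fun x y => (G.dist x y : ℝ)) T' γ' := by
    rintro s ⟨i, rfl⟩ t ⟨j, rfl⟩
    show (G.dist (γ' (n i : ℝ)) (γ' (n j : ℝ)) : ℝ) = _
    rw [hγ'n i, hγ'n j]
    rcases le_total i j with h | h
    · exact hkey i j h
    · rw [SimpleGraph.dist_comm, abs_sub_comm]
      exact hkey j i h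
  refine ⟨T', γ', hray', hgeod, ?_⟩
  intro y z
  obtain ⟨m₁, -, hm₁⟩ := hsched y 0
  obtain ⟨m₂, -, hm₂⟩ := hsched z 0
  set J : ℕ := max m₁ m₂ + 1 with hJdef
  have hpy : ∀ j, J ≤ j → ∀ t ∈ S j,
      G.dist y (w j) + G.dist (w j) (γ t) = G.dist y (γ t) :=
    fun j hj => hpers' y m₁ hm₁ j (by omega)
  have hpz : ∀ j, J ≤ j → ∀ t ∈ S j,
      G.dist z (w j) + G.dist (w j) (γ t) = G.dist z (γ t) :=
    fun j hj => hpers' z m₂ hm₂ j (by omega)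
  set L : ℝ := (G.dist y (w J) : ℝ) - (G.dist z (w J) : ℝ) with hLdef
  have claimA : ∀ j, J ≤ j → (G.dist y (w j) : ℝ) - (G.dist z (w j) : ℝ) = L := by
    intro j hj
    obtain ⟨t, ht⟩ := hSne j
    have h1 := hpy j hj t ht
    have h2 := hpz j hj t ht
    have h3 := hpy J le_rfl t (hSsub J j hj ht)
    have h4 := hpz J le_rfl t (hSsub J j hj ht)
    have h5 : G.dist y (w j) + G.dist z (w J) = G.dist z (w j) + G.dist y (w J) := by omega
    have h6 : (G.dist y (w j) : ℝ) + (G.dist z (w J) : ℝ)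
        = (G.dist z (w j) : ℝ) + (G.dist y (w J) : ℝ) := by exact_mod_cast h5
    rw [hLdef]; linarith
  refine ⟨L, ?_, ?_⟩
  · -- limit along the weakly-geodesic ray
    show Tendsto (fun t => (G.dist (γ t) y : ℝ) - (G.dist (γ t) z : ℝ)) (atTop ⊓ 𝓟 T) (𝓝 L)
    rw [Metric.tendsto_nhds]
    intro ε hε
    obtain ⟨N₁, hN₁⟩ := hγ y (ε/2) (by linarith)
    obtain ⟨N₂, hN₂⟩ := hγ z (ε/2) (by linarith)
    obtain ⟨t₀, ht₀S, ht₀⟩ := hScof J (max N₁ N₂)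
    have ht₀T : t₀ ∈ T := hSsubT J ht₀S
    have hf0y := hpy J le_rfl t₀ ht₀S
    have hf0z := hpz J le_rfl t₀ ht₀S
    have hft₀ : (G.dist (γ t₀) y : ℝ) - (G.dist (γ t₀) z : ℝ) = L := by
      rw [SimpleGraph.dist_comm (u := γ t₀) (v := y), SimpleGraph.dist_comm (u := γ t₀) (v := z)]
      have h5 : G.dist y (γ t₀) + G.dist z (w J) = G.dist z (γ t₀) + G.dist y (w J) := by omega
      have h6 : (G.dist y (γ t₀) : ℝ) + (G.dist z (w J) : ℝ)
          = (G.dist z (γ t₀) : ℝ) + (G.dist y (w J) : ℝ) := by exact_mod_cast h5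
      rw [hLdef]; linarith
    rw [eventually_inf_principal]
    filter_upwards [Filter.Ici_mem_atTop (max N₁ N₂)] with t ht htT
    have hN₁t₀ : N₁ ≤ t₀ := le_trans (le_max_left _ _) ht₀.le
    have hN₂t₀ : N₂ ≤ t₀ := le_trans (le_max_right _ _) ht₀.le
    have hN₁t : N₁ ≤ t := le_trans (le_max_left _ _) ht
    have hN₂t : N₂ ≤ t := le_trans (le_max_right _ _) ht
    have h1 : |(G.dist (γ t) y : ℝ) - (G.dist (γ t₀) y : ℝ) - (t - t₀)| < ε/2 :=
      (hN₁ t₀ ht₀T t htT hN₁t₀ hN₁t).2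
    have h2 : |(G.dist (γ t) z : ℝ) - (G.dist (γ t₀) z : ℝ) - (t - t₀)| < ε/2 :=
      (hN₂ t₀ ht₀T t htT hN₂t₀ hN₂t).2
    rw [Real.dist_eq]
    rw [abs_lt] at h1 h2 ⊢
    constructor <;> [skip; skip] <;> linarith [hft₀]
  · -- limit along the geodesic ray
    show Tendsto (fun x => (G.dist (γ' x) y : ℝ) - (G.dist (γ' x) z : ℝ)) (atTop ⊓ 𝓟 T') (𝓝 L)
    have hev : (fun _ : ℝ => L) =ᶠ[atTop ⊓ 𝓟 T']
        fun x => (G.dist (γ' x) y : ℝ) - (G.dist (γ' x) z : ℝ) := by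
      rw [Filter.EventuallyEq, eventually_inf_principal]
      filter_upwards [Filter.Ici_mem_atTop ((n J : ℝ))] with x hx hxT'
      obtain ⟨j, rfl⟩ := hxT'
      have hx' : ((n J : ℕ) : ℝ) ≤ ((n j : ℕ) : ℝ) := hx
      have hcast : n J ≤ n j := by exact_mod_cast hx'
      have hJj : J ≤ j := by
        by_contra hc
        push_neg at hc
        exact absurd hcast (Nat.not_le.mpr (hnlt j J hc))
      rw [hγ'n j]
      have hA := claimA j hJj
      rw [SimpleGraph.dist_comm (u := y) (v := w j), SimpleGraph.dist_comm (u := z) (v := w j)]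
        at hA
      linarith
    exact Tendsto.congr' hev tendsto_const_nhds
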